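/- Let μ be a probability measure on Ω, let Xᵢ, Xⱼ be Boolean sensitivity indicators with μ(Xᵢ = a ∧ Xⱼ = b) > 0 for all a, b ∈ {0,1}, and let Mᵢ be the release indicator produced by the OSDPRR mechanism with parameter εᵢ > 0 for Xᵢ, with Mᵢ conditionally independent of Xⱼ given Xᵢ. Set δ₁ = P(Xᵢ = 0 | Xⱼ = 0) and δ₂ = P(Xᵢ = 0 | Xⱼ = 1). Then μ(Mᵢ = 1) > 0 and P(Xⱼ = 0 | Mᵢ = 1) / P(Xⱼ = 1 | Mᵢ = 1) = [(1 − δ₁)/(1 − δ₂)] · μ(Xⱼ = 0) / μ(Xⱼ = 1). -/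

import Mathlib

open MeasureTheory Real

/-- Conditional probability `P(A | B) = μ(A ∩ B) / μ(B)`, as a real number. -/
noncomputable def condProb {Ω : Type*} [MeasurableSpace Ω] (μ : Measure Ω) (A B : Set Ω) : ℝ :=
  (μ (A ∩ B)).toReal / (μ B).toReal

lemma split_bool' {Ω : Type*} [MeasurableSpace Ω] (μ : Measure Ω) (X : Ω → Bool)
    (hX : Measurable X) (S : Set Ω) :
    μ S = μ (S ∩ {ω | X ω = true}) + μ (S ∩ {ω | X ω = false}) := by
  have hdiff : S \ (X ⁻¹' {true}) = S ∩ {ω | X ω = false} := by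
    ext ω; by_cases h : X ω <;> simp [h]
  have hint : S ∩ (X ⁻¹' {true}) = S ∩ {ω | X ω = true} := rfl
  rw [← measure_inter_add_diff S (hX (measurableSet_singleton true)), hdiff, hint]

/-- **Theorem 3, record released.** With `δ₁ = P(Xᵢ = 0 | Xⱼ = 0)` and
`δ₂ = P(Xᵢ = 0 | Xⱼ = 1)`, if record `rᵢ` is released under OSDPRR with parameter `εᵢ`, then
the event `Mᵢ = 1` has positive probability and
`P(Xⱼ=0 | Mᵢ=1) / P(Xⱼ=1 | Mᵢ=1) = [(1−δ₁)/(1−δ₂)] · P(Xⱼ=0)/P(Xⱼ=1)`. -/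
theorem osdprr_dependent_leakage_released {Ω : Type*} [MeasurableSpace Ω]
    (μ : Measure Ω) [IsProbabilityMeasure μ]
    (Xi Xj Mi : Ω → Bool)
    (hXi : Measurable Xi) (hXj : Measurable Xj) (hMi : Measurable Mi)
    (εi : ℝ) (hεi : 0 < εi)
    (hpos : ∀ a b : Bool, 0 < μ {ω | Xi ω = a ∧ Xj ω = b})
    -- OSDPRR for Xᵢ: a sensitive record is never released
    (hrel0 : μ {ω | Mi ω = true ∧ Xi ω = false} = 0)
    -- OSDPRR for Xᵢ: a non-sensitive record is released with probability 1 - e^{-εᵢ}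
    (hrel1 : (μ {ω | Mi ω = true ∧ Xi ω = true}).toReal
        = (1 - Real.exp (-εi)) * (μ {ω | Xi ω = true}).toReal)
    -- conditional independence of Mᵢ and Xⱼ given Xᵢ
    (hCI : ∀ m a b : Bool,
      μ {ω | Mi ω = m ∧ Xi ω = a ∧ Xj ω = b} * μ {ω | Xi ω = a}
        = μ {ω | Mi ω = m ∧ Xi ω = a} * μ {ω | Xi ω = a ∧ Xj ω = b}) :
    0 < μ {ω | Mi ω = true} ∧
      condProb μ {ω | Xj ω = false} {ω | Mi ω = true}
          / condProb μ {ω | Xj ω = true} {ω | Mi ω = true}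
        = ((1 - condProb μ {ω | Xi ω = false} {ω | Xj ω = false})
            / (1 - condProb μ {ω | Xi ω = false} {ω | Xj ω = true}))
          * ((μ {ω | Xj ω = false}).toReal / (μ {ω | Xj ω = true}).toReal) := by
  have hfin : ∀ s : Set Ω, μ s ≠ ⊤ := fun s => measure_ne_top μ s
  -- real-valued abbreviations
  set p : Bool → Bool → ℝ := fun a b => (μ {ω | Xi ω = a ∧ Xj ω = b}).toReal with hp
  have hppos : ∀ a b, 0 < p a b := fun a b =>
    ENNReal.toReal_pos (hpos a b).ne' (hfin _)
  set c := 1 - Real.exp (-εi) with hc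
  have hcpos : 0 < c := by
    have : Real.exp (-εi) < 1 := Real.exp_lt_one_iff.mpr (by linarith)
    linarith
  -- t = μ(Xi = true)
  have ht : ∀ a : Bool, (μ {ω | Xi ω = a}).toReal = p a false + p a true := by
    intro a
    have := split_bool' μ Xj hXj {ω | Xi ω = a}
    have h1 : {ω | Xi ω = a} ∩ {ω | Xj ω = true} = {ω | Xi ω = a ∧ Xj ω = true} := rfl
    have h2 : {ω | Xi ω = a} ∩ {ω | Xj ω = false} = {ω | Xi ω = a ∧ Xj ω = false} := rfl
    rw [h1, h2] at this
    rw [this, ENNReal.toReal_add (hfin _) (hfin _)]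
    ring
  have htpos : 0 < (μ {ω | Xi ω = true}).toReal := by
    rw [ht]; have := hppos true false; have := hppos true true; linarith
  -- q b = μ(Xj = b)
  have hq : ∀ b : Bool, (μ {ω | Xj ω = b}).toReal = p true b + p false b := by
    intro b
    have := split_bool' μ Xi hXi {ω | Xj ω = b}
    have h1 : {ω | Xj ω = b} ∩ {ω | Xi ω = true} = {ω | Xi ω = true ∧ Xj ω = b} := by
      ext ω; exact and_comm
    have h2 : {ω | Xj ω = b} ∩ {ω | Xi ω = false} = {ω | Xi ω = false ∧ Xj ω = b} := by
      ext ω; exact and_comm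
    rw [h1, h2] at this
    rw [this, ENNReal.toReal_add (hfin _) (hfin _)]
  -- μ(Mi = 1) = c * t
  have hm : (μ {ω | Mi ω = true}).toReal = c * (μ {ω | Xi ω = true}).toReal := by
    have := split_bool' μ Xi hXi {ω | Mi ω = true}
    have h1 : {ω | Mi ω = true} ∩ {ω | Xi ω = true} = {ω | Mi ω = true ∧ Xi ω = true} := rfl
    have h2 : {ω | Mi ω = true} ∩ {ω | Xi ω = false} = {ω | Mi ω = true ∧ Xi ω = false} := rfl
    rw [h1, h2, hrel0, add_zero] at this
    rw [this, hrel1]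
  have hmpos : 0 < (μ {ω | Mi ω = true}).toReal := by
    rw [hm]; positivity
  have hMpos : 0 < μ {ω | Mi ω = true} := by
    rcases eq_or_lt_of_le (zero_le : (0 : ENNReal) ≤ μ {ω | Mi ω = true}) with h | h
    · rw [← h] at hmpos; simp at hmpos
    · exact h
  refine ⟨hMpos, ?_⟩
  -- μ(Xj=b ∧ Mi=1) = c * p true b
  have hkey : ∀ b : Bool,
      (μ ({ω | Xj ω = b} ∩ {ω | Mi ω = true})).toReal = c * p true b := by
    intro b
    have hsplit := split_bool' μ Xi hXi ({ω | Xj ω = b} ∩ {ω | Mi ω = true})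
    have h2 : μ (({ω | Xj ω = b} ∩ {ω | Mi ω = true}) ∩ {ω | Xi ω = false}) = 0 := by
      refine measure_mono_null ?_ hrel0
      rintro ω ⟨⟨_, h1⟩, h2⟩; exact ⟨h1, h2⟩
    have h1 : ({ω | Xj ω = b} ∩ {ω | Mi ω = true}) ∩ {ω | Xi ω = true}
        = {ω | Mi ω = true ∧ Xi ω = true ∧ Xj ω = b} := by
      ext ω
      simp only [Set.mem_inter_iff, Set.mem_setOf_eq]
      tauto
    rw [h1, h2, add_zero] at hsplit
    -- use CI
    have hci := hCI true true b
    have hci' := congrArg ENNReal.toReal hci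
    rw [ENNReal.toReal_mul, ENNReal.toReal_mul, hrel1] at hci'
    have : (μ {ω | Mi ω = true ∧ Xi ω = true ∧ Xj ω = b}).toReal
        = c * p true b := by
      have h := hci'.trans (by ring :
        c * (μ {ω | Xi ω = true}).toReal * (μ {ω | Xi ω = true ∧ Xj ω = b}).toReal
          = (c * p true b) * (μ {ω | Xi ω = true}).toReal)
      exact mul_right_cancel₀ htpos.ne' h
    rw [hsplit, this]
  -- δ's
  have hδ : ∀ b : Bool, condProb μ {ω | Xi ω = false} {ω | Xj ω = b}
      = p false b / (p true b + p false b) := by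
    intro b
    unfold condProb
    have h1 : {ω | Xi ω = false} ∩ {ω | Xj ω = b} = {ω | Xi ω = false ∧ Xj ω = b} := rfl
    rw [h1, hq b]
  rw [hδ false, hδ true]
  unfold condProb
  rw [hkey false, hkey true, hq false, hq true, hm]
  have h1 := hppos true false
  have h2 := hppos true true
  have h3 := hppos false false
  have h4 := hppos false true
  have hq0 : p true false + p false false ≠ 0 := by positivity
  have hq1 : p true true + p false true ≠ 0 := by positivity
  have h5 : 1 - p false false / (p true false + p false false)
      = p true false / (p true false + p false false) := by
    rw [eq_div_iff hq0, sub_mul, div_mul_cancel₀ _ hq0]; ring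
  have h6 : 1 - p false true / (p true true + p false true)
      = p true true / (p true true + p false true) := by
    rw [eq_div_iff hq1, sub_mul, div_mul_cancel₀ _ hq1]; ring
  rw [h5, h6]
  have hct : c * (μ {ω | Xi ω = true}).toReal ≠ 0 := by positivity
  field_simp
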